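/- For all n ≥ 2, the sum over k from 4 to 2^{n+1}−1 of b_k(q) equals 3 times the sum over k from 2 to 2^n−1 of b_k(q) plus 2(q−1) times the sum over k from 1 to 2^{n−1}−1 of b_k(q). -/

import Mathlib

open Polynomial

private lemma stern_key (b : ℕ → Polynomial ℤ)
    (hb1 : b 1 = 1)
    (hb2 : ∀ n ≥ 1, b (2 * n) = b n)
    (hb41 : ∀ n ≥ 1, b (4 * n + 1) = X * b (2 * n) + b (2 * n + 1))
    (hb43 : ∀ n : ℕ, b (4 * n + 3) = b (2 * n + 1) + X * b (2 * n + 2)) :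
    ∀ M ≥ 1, ∑ k ∈ Finset.Icc 1 (4 * M - 1), b k
      = 3 * ∑ k ∈ Finset.Icc 1 (2 * M - 1), b k
        + 2 * (X - 1) * ∑ k ∈ Finset.Icc 1 (M - 1), b k + X * b M := by
  intro M hM
  induction M, hM using Nat.le_induction with
  | base =>
      have h2 : b 2 = b 1 := hb2 1 (by omega)
      have h3 : b 3 = b 1 + X * b 2 := hb43 0
      norm_num [Finset.sum_Icc_succ_top, h2, h3, hb1]
      ring
  | succ M hM IH =>
      rw [show 4 * (M + 1) - 1 = (4 * M - 1) + 1 + 1 + 1 + 1 from by omega,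
          Finset.sum_Icc_succ_top (by omega), Finset.sum_Icc_succ_top (by omega),
          Finset.sum_Icc_succ_top (by omega), Finset.sum_Icc_succ_top (by omega),
          show 2 * (M + 1) - 1 = (2 * M - 1) + 1 + 1 from by omega,
          Finset.sum_Icc_succ_top (by omega), Finset.sum_Icc_succ_top (by omega),
          show (M + 1) - 1 = (M - 1) + 1 from by omega,
          Finset.sum_Icc_succ_top (by omega),
          show 4 * M - 1 + 1 = 4 * M from by omega,
          show 2 * M - 1 + 1 = 2 * M from by omega,
          show M - 1 + 1 = M from by omega, IH]
      have e1 : b (4 * M) = b M := by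
        rw [show 4 * M = 2 * (2 * M) from by ring, hb2 _ (by omega), hb2 _ hM]
      have e2 : b (4 * M + 1) = X * b M + b (2 * M + 1) := by
        rw [hb41 M hM, hb2 _ hM]
      have e3 : b (4 * M - 1 + 2 + 1) = b (2 * M + 1) := by
        rw [show 4 * M - 1 + 2 + 1 = 2 * (2 * M + 1) from by omega, hb2 _ (by omega)]
      have e4 : b (4 * M - 1 + 3 + 1) = b (2 * M + 1) + X * b (M + 1) := by
        rw [show 4 * M - 1 + 3 + 1 = 4 * M + 3 from by omega, hb43 M,
          show 2 * M + 2 = 2 * (M + 1) from by ring, hb2 _ (by omega)]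
      have e5 : b (2 * M) = b M := hb2 _ hM
      rw [e1, e2, e3, e4, e5]
      ring

theorem stern_b_sum_recurrence (b : ℕ → Polynomial ℤ)
    (hb1 : b 1 = 1)
    (hb2 : ∀ n ≥ 1, b (2 * n) = b n)
    (hb41 : ∀ n ≥ 1, b (4 * n + 1) = X * b (2 * n) + b (2 * n + 1))
    (hb43 : ∀ n : ℕ, b (4 * n + 3) = b (2 * n + 1) + X * b (2 * n + 2)) :
    ∀ n ≥ 2, ∑ k ∈ Finset.Icc 4 (2 ^ (n + 1) - 1), b k
      = 3 * ∑ k ∈ Finset.Icc 2 (2 ^ n - 1), b k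
        + 2 * (X - 1) * ∑ k ∈ Finset.Icc 1 (2 ^ (n - 1) - 1), b k := by
  have hpow : ∀ j, b (2 ^ j) = 1 := by
    intro j
    induction j with
    | zero => simpa using hb1
    | succ j ih =>
        rw [pow_succ, mul_comm, hb2 _ (Nat.one_le_two_pow), ih]
  intro n hn
  set M := 2 ^ (n - 1) with hMdef
  have hM1 : 1 ≤ M := Nat.one_le_two_pow
  have h2M : 2 * M = 2 ^ n := by
    rw [hMdef, ← pow_succ']
    congr 1; omega
  have h4M : 4 * M = 2 ^ (n + 1) := by
    rw [show (4 : ℕ) = 2 * 2 from rfl, mul_assoc, h2M, ← pow_succ']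
  rw [← h2M, ← h4M]
  have hkey := stern_key b hb1 hb2 hb41 hb43 M hM1
  have hsplit1 : ∑ k ∈ Finset.Icc 1 (4 * M - 1), b k
      = (∑ k ∈ Finset.Icc 1 3, b k) + ∑ k ∈ Finset.Icc 4 (4 * M - 1), b k := by
    rw [← Finset.sum_union (by simp [Finset.disjoint_left]; omega)]
    congr 1
    ext x; simp; omega
  have hsplit2 : ∑ k ∈ Finset.Icc 1 (2 * M - 1), b k
      = b 1 + ∑ k ∈ Finset.Icc 2 (2 * M - 1), b k := by
    rw [show Finset.Icc 1 (2 * M - 1) = insert 1 (Finset.Icc 2 (2 * M - 1)) from by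
      ext x; simp; omega, Finset.sum_insert (by simp)]
  have hS3 : ∑ k ∈ Finset.Icc 1 3, b k = 3 + X := by
    have h2 : b 2 = b 1 := hb2 1 (by omega)
    have h3 : b 3 = b 1 + X * b 2 := hb43 0
    norm_num [Finset.sum_Icc_succ_top, h2, h3, hb1]
    ring
  rw [hsplit1, hsplit2, hS3, hb1, hpow (n - 1)] at hkey
  linear_combination hkey
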